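/- Let H, K be finite-dimensional complex Hilbert spaces and T : H → K a map such that on every two-dimensional subspace of H, T agrees up to unimodular scalar factors with a linear or antilinear map on that subspace (i.e., T(f + αh) = θ₁(f,α)Tf + θ₂(f,α)·α·Th or with conj(α), for unimodular θᵢ). If e₁,…,e_n is an orthonormal basis of H, then T(Σᵢ αᵢ eᵢ) = Σᵢ θᵢ(α) αᵢ' T(eᵢ) where each αᵢ' is αᵢ or its conjugate and θᵢ(α) are unimodular; in particular the range of T lies in the span of T(e₁),…,T(e_n). -/

import Mathlib

open scoped ComplexConjugate

theorem stmt9 {H K : Type*}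
    [NormedAddCommGroup H] [InnerProductSpace ℂ H] [FiniteDimensional ℂ H]
    [NormedAddCommGroup K] [InnerProductSpace ℂ K] [FiniteDimensional ℂ K]
    (T : H → K)
    (h2 : ∀ (f h : H) (α : ℂ), ∃ θ₁ θ₂ : ℂ,
      ‖θ₁‖ = 1 ∧ ‖θ₂‖ = 1 ∧
      (T (f + α • h) = θ₁ • T f + (θ₂ * α) • T h ∨
       T (f + α • h) = θ₁ • T f + (θ₂ * (starRingEnd ℂ) α) • T h)) :
    ∀ (n : ℕ) (e : Fin n → H), Orthonormal ℂ e →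
      Submodule.span ℂ (Set.range e) = ⊤ →
      ∀ a : Fin n → ℂ, ∃ (θ : Fin n → ℂ) (a' : Fin n → ℂ),
        (∀ i, ‖θ i‖ = 1) ∧
        (∀ i, a' i = a i ∨ a' i = (starRingEnd ℂ) (a i)) ∧
        T (∑ i, a i • e i) = ∑ i, (θ i * a' i) • T (e i) ∧
        T (∑ i, a i • e i) ∈ Submodule.span ℂ (Set.range fun i => T (e i)) := by
  have hT0 : T 0 = 0 := by
    obtain ⟨θ₁, θ₂, hθ₁, hθ₂, h⟩ := h2 0 0 3
    have h3 : (starRingEnd ℂ) 3 = 3 := by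
      rw [Complex.ext_iff]; simp
    rw [h3] at h
    have h' : T 0 = θ₁ • T 0 + (θ₂ * 3) • T 0 := by
      rcases h with h | h <;> simpa using h
    have hz : (1 - θ₁ - θ₂ * 3) • T 0 = 0 := by
      rw [sub_smul, sub_smul, one_smul, sub_sub, ← h', sub_self]
    rcases smul_eq_zero.mp hz with hc | h0
    · exfalso
      have hθ1 : θ₁ = 1 - θ₂ * 3 := by linear_combination -hc
      have h1 : ‖1 - θ₂ * 3‖ = 1 := hθ1 ▸ hθ₁
      have h32 : ‖θ₂ * 3‖ = 3 := by
        rw [norm_mul, hθ₂]; simp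
      have hle : ‖θ₂ * 3‖ ≤ ‖θ₂ * 3 - 1‖ + ‖(1:ℂ)‖ := by
        calc ‖θ₂ * 3‖ = ‖θ₂ * 3 - 1 + 1‖ := by ring_nf
        _ ≤ ‖θ₂ * 3 - 1‖ + ‖(1:ℂ)‖ := norm_add_le _ _
      rw [h32, norm_sub_rev, h1] at hle
      simp at hle
      norm_num at hle
    · exact h0
  have key : ∀ (n : ℕ) (e : Fin n → H) (a : Fin n → ℂ),
      ∃ (θ : Fin n → ℂ) (a' : Fin n → ℂ),
        (∀ i, ‖θ i‖ = 1) ∧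
        (∀ i, a' i = a i ∨ a' i = (starRingEnd ℂ) (a i)) ∧
        T (∑ i, a i • e i) = ∑ i, (θ i * a' i) • T (e i) := by
    intro n
    induction n with
    | zero =>
      intro e a
      exact ⟨fun _ => 1, fun i => a i, fun i => by simp, fun i => Or.inl rfl, by simp [hT0]⟩
    | succ n ih =>
      intro e a
      obtain ⟨θ, a', hθ, ha', heq⟩ := ih (fun i => e i.castSucc) (fun i => a i.castSucc)
      obtain ⟨θ₁, θ₂, hθ₁, hθ₂, hc⟩ :=
        h2 (∑ i : Fin n, a i.castSucc • e i.castSucc) (e (Fin.last n)) (a (Fin.last n))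
      rcases hc with hc | hc
      · refine ⟨Fin.snoc (fun i => θ₁ * θ i) θ₂, Fin.snoc a' (a (Fin.last n)), ?_, ?_, ?_⟩
        · intro i
          refine Fin.lastCases ?_ ?_ i
          · simp [hθ₂]
          · intro j; simp [map_mul, hθ₁, hθ j]
        · intro i
          refine Fin.lastCases ?_ ?_ i
          · simp
          · intro j; simpa using ha' j
        · rw [Fin.sum_univ_castSucc, Fin.sum_univ_castSucc, hc, heq, Finset.smul_sum]
          simp only [Fin.snoc_castSucc, Fin.snoc_last]
          congr 1
          refine Finset.sum_congr rfl fun i _ => ?_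
          rw [smul_smul, mul_assoc]
      · refine ⟨Fin.snoc (fun i => θ₁ * θ i) θ₂,
          Fin.snoc a' ((starRingEnd ℂ) (a (Fin.last n))), ?_, ?_, ?_⟩
        · intro i
          refine Fin.lastCases ?_ ?_ i
          · simp [hθ₂]
          · intro j; simp [map_mul, hθ₁, hθ j]
        · intro i
          refine Fin.lastCases ?_ ?_ i
          · simp
          · intro j; simpa using ha' j
        · rw [Fin.sum_univ_castSucc, Fin.sum_univ_castSucc, hc, heq, Finset.smul_sum]
          simp only [Fin.snoc_castSucc, Fin.snoc_last]
          congr 1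
          refine Finset.sum_congr rfl fun i _ => ?_
          rw [smul_smul, mul_assoc]
  intro n e _ _ a
  obtain ⟨θ, a', hθ, ha', heq⟩ := key n e a
  refine ⟨θ, a', hθ, ha', heq, ?_⟩
  rw [heq]
  exact Submodule.sum_mem _ fun i _ =>
    Submodule.smul_mem _ _ (Submodule.subset_span ⟨i, rfl⟩)
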